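/- Let 𝔾 = (I,Δ) be a discrete quantum semigroup, 𝔫 a linear functional on F_b(𝔾), and f ∈ F_{b:1}(𝔾×𝔾). Then Δ((𝔫 ⊗̃ id)(f)) = (𝔫 ⊗̃ id ⊗̃ id)((id ⊗̃ Δ)(f)). -/

import Mathlib

open scoped Matrix.Norms.L2Operator Kronecker ComplexOrder

namespace DQSG

/-- The matrix algebra `M_k(ℂ)`. -/
abbrev Mat (k : ℕ) : Type := Matrix (Fin k) (Fin k) ℂ

/-- `M_k(ℂ) ⊗ M_l(ℂ)`, realized as matrices indexed by `Fin k × Fin l`. -/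
abbrev Mat2 (k l : ℕ) : Type := Matrix (Fin k × Fin l) (Fin k × Fin l) ℂ

/-- `M_k(ℂ) ⊗ M_l(ℂ) ⊗ M_p(ℂ)`. -/
abbrev Mat3 (k l p : ℕ) : Type :=
  Matrix (Fin k × Fin l × Fin p) (Fin k × Fin l × Fin p) ℂ

/-- The function algebra `F(I)` of an index system `(I, n)`. -/
abbrev FI {I : Type*} (n : I → ℕ) : Type _ := ∀ γ : I, Mat (n γ)

/-- The function algebra `F(I × J)`. -/
abbrev FI2 {I J : Type*} (n : I → ℕ) (m : J → ℕ) : Type _ :=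
  ∀ (α : I) (β : J), Mat2 (n α) (m β)

/-- The function algebra `F(I × J × K)`. -/
abbrev FI3 {I J K : Type*} (n : I → ℕ) (m : J → ℕ) (p : K → ℕ) : Type _ :=
  ∀ (α : I) (β : J) (γ : K), Mat3 (n α) (m β) (p γ)

/-- The subspace `F_b(I)` of bounded functions in `F(I)` (w.r.t. the operator norm). -/
noncomputable def Fb {I : Type*} (n : I → ℕ) : Submodule ℂ (FI n) where
  carrier := {f | ∃ C : ℝ, ∀ γ, ‖f γ‖ ≤ C}
  zero_mem' := ⟨0, fun γ => by simp⟩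
  add_mem' := by
    rintro f g ⟨C, hC⟩ ⟨D, hD⟩
    exact ⟨C + D, fun γ => (norm_add_le _ _).trans (add_le_add (hC γ) (hD γ))⟩
  smul_mem' := by
    rintro c f ⟨C, hC⟩
    exact ⟨‖c‖ * C, fun γ => by
      rw [Pi.smul_apply, norm_smul]
      exact mul_le_mul_of_nonneg_left (hC γ) (norm_nonneg c)⟩

/-- `F_{b:1}(I × J)`: functions bounded in the first variable, for each fixed
second variable. -/
def Fb1 {I J : Type*} {n : I → ℕ} {m : J → ℕ} (f : FI2 n m) : Prop :=
  ∀ β : J, ∃ C : ℝ, ∀ α : I, ‖f α β‖ ≤ C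

/-- `F_{b:2}(I × J)`: functions bounded in the second variable, for each fixed
first variable. -/
def Fb2 {I J : Type*} {n : I → ℕ} {m : J → ℕ} (f : FI2 n m) : Prop :=
  ∀ α : I, ∃ C : ℝ, ∀ β : J, ‖f α β‖ ≤ C

/-- The slice `f_β^{ij} ∈ F(I)` of `f ∈ F(I × J)`,
so that `f(α,β) = Σ_{i,j} f_β^{ij}(α) ⊗ e_β^{ij}`. -/
def slice2 {I J : Type*} {n : I → ℕ} {m : J → ℕ} (f : FI2 n m) (β : J)
    (i j : Fin (m β)) : FI n :=
  fun α => Matrix.of fun k l => f α β (k, i) (l, j)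

/-- The slice `f_β^{ij} ∈ F(I)` of `f ∈ F(J × I)`,
so that `f(β,α) = Σ_{i,j} e_β^{ij} ⊗ f_β^{ij}(α)`. -/
def slice1 {I J : Type*} {n : I → ℕ} {m : J → ℕ} (f : FI2 m n) (β : J)
    (i j : Fin (m β)) : FI n :=
  fun α => Matrix.of fun k l => f β α (i, k) (j, l)

/-- `T ⊗̃ id : F(I × J) → F(I' × J)` for a map `T : F(I) → F(I')`. -/
def tenR {I I' J : Type*} {n : I → ℕ} {n' : I' → ℕ} {m : J → ℕ}
    (T : FI n → FI n') (f : FI2 n m) : FI2 n' m :=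
  fun α' β => Matrix.of fun u v => T (slice2 f β u.2 v.2) α' u.1 v.1

/-- `id ⊗̃ T : F(J × I) → F(J × I')` for a map `T : F(I) → F(I')`. -/
def tenL {I I' J : Type*} {n : I → ℕ} {n' : I' → ℕ} {m : J → ℕ}
    (T : FI n → FI n') (f : FI2 m n) : FI2 m n' :=
  fun β α' => Matrix.of fun u v => T (slice1 f β u.1 v.1) α' u.2 v.2

/-- `T ⊗̃ id : F(I × J) → F(I₁ × I₂ × J)` for a map `T : F(I) → F(I₁ × I₂)`. -/
def tenR2 {I I₁ I₂ J : Type*} {n : I → ℕ} {n₁ : I₁ → ℕ} {n₂ : I₂ → ℕ} {m : J → ℕ}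
    (T : FI n → FI2 n₁ n₂) (f : FI2 n m) : FI3 n₁ n₂ m :=
  fun β₁ β₂ γ => Matrix.of fun u v =>
    T (slice2 f γ u.2.2 v.2.2) β₁ β₂ (u.1, u.2.1) (v.1, v.2.1)

/-- `id ⊗̃ T : F(J × I) → F(J × I₁ × I₂)` for a map `T : F(I) → F(I₁ × I₂)`. -/
def tenL2 {I I₁ I₂ J : Type*} {n : I → ℕ} {n₁ : I₁ → ℕ} {n₂ : I₂ → ℕ} {m : J → ℕ}
    (T : FI n → FI2 n₁ n₂) (f : FI2 m n) : FI3 m n₁ n₂ :=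
  fun γ β₁ β₂ => Matrix.of fun u v =>
    T (slice1 f γ u.1 v.1) β₁ β₂ u.2 v.2

open scoped Classical in
/-- Apply a functional defined on `F_b(I)` to an arbitrary element of `F(I)`,
extended by `0` off `F_b(I)`. -/
noncomputable def apF {I : Type*} {n : I → ℕ} (𝔪 : Fb n →ₗ[ℂ] ℂ) (g : FI n) : ℂ :=
  if h : g ∈ Fb n then 𝔪 ⟨g, h⟩ else 0

/-- `𝔪 ⊗̃ id : F(I × J) → F(J)` for a functional `𝔪` on `F_b(I)`. -/
noncomputable def fTenR {I J : Type*} {n : I → ℕ} {m : J → ℕ}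
    (𝔪 : Fb n →ₗ[ℂ] ℂ) (f : FI2 n m) : FI m :=
  fun β => Matrix.of fun i j => apF 𝔪 (slice2 f β i j)

/-- `id ⊗̃ 𝔪 : F(J × I) → F(J)` for a functional `𝔪` on `F_b(I)`. -/
noncomputable def fTenL {I J : Type*} {n : I → ℕ} {m : J → ℕ}
    (𝔪 : Fb n →ₗ[ℂ] ℂ) (f : FI2 m n) : FI m :=
  fun β => Matrix.of fun i j => apF 𝔪 (slice1 f β i j)

/-- `𝔪 ⊗̃ id ⊗̃ id : F(I × J × K) → F(J × K)` for a functional `𝔪` on `F_b(I)`. -/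
noncomputable def fTenR3 {I J K : Type*} {n : I → ℕ} {m : J → ℕ} {p : K → ℕ}
    (𝔪 : Fb n →ₗ[ℂ] ℂ) (f : FI3 n m p) : FI2 m p :=
  fun β γ => Matrix.of fun u v =>
    apF 𝔪 (fun α => Matrix.of fun k l => f α β γ (k, u) (l, v))

/-- A state on the C*-algebra `F_b(I)`: a positive linear functional with `𝔪(1) = 1`. -/
def IsState {I : Type*} {n : I → ℕ} (𝔪 : Fb n →ₗ[ℂ] ℂ) : Prop :=
  (∀ g : FI n, g ∈ Fb n → 0 ≤ apF 𝔪 (star g * g)) ∧ apF 𝔪 1 = 1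

/-- A comultiplication on the index system `(I, n)`, i.e. the structure of a
discrete quantum semigroup. `D α β γ` is the *-homomorphism
`Δ^α_{β,γ} : M_{n(α)} → M_{n(β)} ⊗ M_{n(γ)}`. -/
structure Comul {I : Type*} (n : I → ℕ) where
  /-- the family of *-homomorphisms `Δ^α_{β,γ}` -/
  D : ∀ α β γ : I, Mat (n α) → Mat2 (n β) (n γ)
  linear : ∀ α β γ, IsLinearMap ℂ (D α β γ)
  map_mul' : ∀ α β γ x y, D α β γ (x * y) = D α β γ x * D α β γ y
  map_star' : ∀ α β γ x, D α β γ (star x) = star (D α β γ x)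
  /-- condition (i): `Δ^α_{β,γ}(1) Δ^{α'}_{β,γ}(1) = 0` for `α ≠ α'` -/
  orth : ∀ β γ α α' : I, α ≠ α' → D α β γ 1 * D α' β γ 1 = 0
  /-- for fixed `β, γ` only finitely many `Δ^α_{β,γ}` are nonzero
  (a consequence of condition (i), included as data) -/
  finite : ∀ β γ : I, {α : I | D α β γ ≠ 0}.Finite
  /-- condition (ii): coassociativity
  `Σ_ω (Δ^ω_{α,β} ⊗ id) ∘ Δ^λ_{ω,γ} = Σ_ω (id ⊗ Δ^ω_{β,γ}) ∘ Δ^λ_{α,ω}`,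
  written entrywise. -/
  coassoc : ∀ (lam α β γ : I) (x : Mat (n lam)) (p p' : Fin (n α))
      (q q' : Fin (n β)) (r r' : Fin (n γ)),
      ∑ᶠ ω : I, D ω α β (Matrix.of fun k l => D lam ω γ x (k, r) (l, r')) (p, q) (p', q')
        = ∑ᶠ ω : I, D ω β γ (Matrix.of fun k l => D lam α ω x (p, k) (p', l)) (q, r) (q', r')

/-- The induced *-homomorphism `Δ : F(I) → F(I × I)`,
`[Δ(f)](β,γ) = Σ_α Δ^α_{β,γ}(f(α))`. -/
noncomputable def Comul.ind {I : Type*} {n : I → ℕ} (C : Comul n) (f : FI n) :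
    FI2 n n :=
  fun β γ => ∑ᶠ α : I, C.D α β γ (f α)

/-- A right invariant mean for a discrete quantum semigroup: a state `𝔪` on
`F_b(𝔾)` with `(𝔪 ⊗̃ id)(Δ f) = 𝔪(f)·1` for all `f ∈ F_b(𝔾)`. -/
def IsRIMean {I : Type*} {n : I → ℕ} (C : Comul n) (𝔪 : Fb n →ₗ[ℂ] ℂ) : Prop :=
  IsState 𝔪 ∧ ∀ f : FI n, f ∈ Fb n →
    fTenR 𝔪 (C.ind f) = fun γ => apF 𝔪 f • (1 : Mat (n γ))

/-- A left invariant mean for a discrete quantum semigroup: a state `𝔪` on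
`F_b(𝔾)` with `(id ⊗̃ 𝔪)(Δ f) = 𝔪(f)·1` for all `f ∈ F_b(𝔾)`. -/
def IsLIMean {I : Type*} {n : I → ℕ} (C : Comul n) (𝔪 : Fb n →ₗ[ℂ] ℂ) : Prop :=
  IsState 𝔪 ∧ ∀ f : FI n, f ∈ Fb n →
    fTenL 𝔪 (C.ind f) = fun γ => apF 𝔪 f • (1 : Mat (n γ))

/-- A *-homomorphism between function algebras: a linear, multiplicative,
star-preserving map. -/
def IsStarHom {I J : Type*} {n : I → ℕ} {m : J → ℕ} (T : FI n → FI m) : Prop :=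
  IsLinearMap ℂ T ∧ (∀ f g, T (f * g) = T f * T g) ∧ ∀ f, T (star f) = star (T f)

open scoped Classical in
/-- Apply a map defined on `F_b(I)` to an arbitrary element of `F(I)`,
extended by `0` off `F_b(I)`. -/
noncomputable def apTb {I J : Type*} {n : I → ℕ} {m : J → ℕ}
    (T : Fb n → FI m) (g : FI n) : FI m :=
  if h : g ∈ Fb n then T ⟨g, h⟩ else 0

/-- `T ⊗̃ id : F_{b:1}(I × J) → F(I' × J)` for a map `T` defined on `F_b(I)`. -/
noncomputable def tenRb {I I' J : Type*} {n : I → ℕ} {n' : I' → ℕ} {m : J → ℕ}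
    (T : Fb n → FI n') (f : FI2 n m) : FI2 n' m :=
  fun α' β => Matrix.of fun u v => apTb T (slice2 f β u.2 v.2) α' u.1 v.1

open scoped Classical in
/-- The canonical embedding `I_α : M_{n(α)} → F(I)` as functions supported at `α`:
`emb α x` is the element of `F(I)` that is `x` at `α` and `0` elsewhere. -/
noncomputable def emb {I : Type*} {n : I → ℕ} (α : I) (x : Mat (n α)) : FI n :=
  Function.update (0 : FI n) α x

/-- The canonical identification `ℂ = M_1(ℂ) → M_1(ℂ) ⊗ M_1(ℂ)` (the identity map). -/
def e11 : Mat 1 → Mat2 1 1 := fun x => Matrix.of fun u v => x u.1 v.1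

/-- The C*-algebra `ℓ∞(G)` of bounded complex-valued functions on `G`,
as a subspace of all complex-valued functions. -/
noncomputable def Fbc (G : Type*) : Submodule ℂ (G → ℂ) where
  carrier := {f | ∃ C : ℝ, ∀ x, ‖f x‖ ≤ C}
  zero_mem' := ⟨0, fun x => by simp⟩
  add_mem' := by
    rintro f g ⟨C, hC⟩ ⟨D, hD⟩
    exact ⟨C + D, fun x => (norm_add_le _ _).trans (add_le_add (hC x) (hD x))⟩
  smul_mem' := by
    rintro c f ⟨C, hC⟩
    exact ⟨‖c‖ * C, fun x => by
      rw [Pi.smul_apply, norm_smul]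
      exact mul_le_mul_of_nonneg_left (hC x) (norm_nonneg c)⟩

open scoped Classical in
/-- Apply a functional defined on `ℓ∞(G)` to an arbitrary function,
extended by `0` off `ℓ∞(G)`. -/
noncomputable def apC {G : Type*} (m : Fbc G →ₗ[ℂ] ℂ) (g : G → ℂ) : ℂ :=
  if h : g ∈ Fbc G then m ⟨g, h⟩ else 0

/-- A state on the C*-algebra `ℓ∞(G)`: a positive linear functional
taking the value `1` at the constant function `1`. -/
def IsCState {G : Type*} (m : Fbc G →ₗ[ℂ] ℂ) : Prop :=
  (∀ g : G → ℂ, g ∈ Fbc G → 0 ≤ apC m (star g * g)) ∧ apC m 1 = 1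



section Aux
open scoped Matrix

private lemma norm_one_le' {p : Type*} [Fintype p] [DecidableEq p] :
    ‖(1 : Matrix p p ℂ)‖ ≤ 1 := by
  rw [Matrix.cstar_norm_def, map_one, ContinuousLinearMap.one_def]
  exact ContinuousLinearMap.norm_id_le

private lemma norm_submatrix_le {m' n' m'' n'' : Type*} [Fintype m'] [Fintype n']
    [Fintype m''] [Fintype n''] [DecidableEq m'] [DecidableEq n'] [DecidableEq m'']
    [DecidableEq n''] (A : Matrix m' n' ℂ) (r : m'' → m') (c : n'' → n')
    (hr : Function.Injective r) (hc : Function.Injective c) :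
    ‖A.submatrix r c‖ ≤ ‖A‖ := by
  set P : Matrix m'' m' ℂ := (1 : Matrix m' m' ℂ).submatrix r id with hP
  set Q : Matrix n' n'' ℂ := (1 : Matrix n' n' ℂ).submatrix id c with hQ
  have hPQ : A.submatrix r c = P * A * Q := by
    ext a b
    simp [hP, hQ, Matrix.mul_apply, Matrix.one_apply]
  have hP2 : P * Pᴴ = 1 := by
    ext a b
    simp [hP, Matrix.mul_apply, Matrix.one_apply, Matrix.conjTranspose_apply, apply_ite,
      hr.eq_iff]
  have hQ2 : Qᴴ * Q = 1 := by
    ext a b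
    simp [hQ, Matrix.mul_apply, Matrix.one_apply, Matrix.conjTranspose_apply, apply_ite,
      hc.eq_iff]
  have hPn : ‖P‖ ≤ 1 := by
    have h := Matrix.l2_opNorm_conjTranspose_mul_self Pᴴ
    rw [Matrix.conjTranspose_conjTranspose, hP2] at h
    have h1 : ‖Pᴴ‖ * ‖Pᴴ‖ ≤ 1 := h ▸ norm_one_le'
    rw [← Matrix.l2_opNorm_conjTranspose P]
    nlinarith [norm_nonneg Pᴴ]
  have hQn : ‖Q‖ ≤ 1 := by
    have h := Matrix.l2_opNorm_conjTranspose_mul_self Q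
    rw [hQ2] at h
    have h1 : ‖Q‖ * ‖Q‖ ≤ 1 := h ▸ norm_one_le'
    nlinarith [norm_nonneg Q]
  calc ‖A.submatrix r c‖ = ‖P * A * Q‖ := by rw [hPQ]
    _ ≤ ‖P * A‖ * ‖Q‖ := Matrix.l2_opNorm_mul _ _
    _ ≤ (‖P‖ * ‖A‖) * ‖Q‖ :=
        mul_le_mul_of_nonneg_right (Matrix.l2_opNorm_mul P A) (norm_nonneg Q)
    _ ≤ 1 * ‖A‖ * 1 :=
        mul_le_mul (mul_le_mul_of_nonneg_right hPn (norm_nonneg A)) hQn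
          (norm_nonneg Q) (by positivity)
    _ = ‖A‖ := by ring

private lemma slice2_mem_Fb {I J : Type*} {n : I → ℕ} {m : J → ℕ} {f : FI2 n m}
    (hf : Fb1 f) (β : J) (i j : Fin (m β)) : slice2 f β i j ∈ Fb n := by
  obtain ⟨Cb, hC⟩ := hf β
  refine ⟨Cb, fun α => ?_⟩
  have h1 : slice2 f β i j α = (f α β).submatrix (fun k => (k, i)) (fun l => (l, j)) := rfl
  rw [h1]
  refine le_trans (norm_submatrix_le _ _ _ ?_ ?_) (hC α)
  · intro a b h; simpa using congrArg Prod.fst h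
  · intro a b h; simpa using congrArg Prod.fst h

private lemma apF_eq {I : Type*} {n : I → ℕ} (𝔫 : Fb n →ₗ[ℂ] ℂ) {g : FI n}
    (hg : g ∈ Fb n) : apF 𝔫 g = 𝔫 ⟨g, hg⟩ := dif_pos hg

private lemma D_apply_expand {k l p : ℕ} (T : Mat k → Mat2 l p) (hT : IsLinearMap ℂ T)
    (x : Mat k) (u v : Fin l × Fin p) :
    T x u v = ∑ i : Fin k, ∑ j : Fin k,
      x i j * T (Matrix.single i j 1) u v := by
  set L := IsLinearMap.mk' T hT with hL
  have hTL : ∀ y, T y = L y := fun y => rfl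
  conv_lhs => rw [hTL, Matrix.matrix_eq_sum_single x]
  rw [map_sum]
  rw [Matrix.sum_apply]
  refine Finset.sum_congr rfl fun i _ => ?_
  rw [map_sum, Matrix.sum_apply]
  refine Finset.sum_congr rfl fun j _ => ?_
  have : Matrix.single i j (x i j) = x i j • Matrix.single i j (1 : ℂ) := by
    rw [Matrix.smul_single, smul_eq_mul, mul_one]
  rw [this, map_smul, Matrix.smul_apply, smul_eq_mul, hTL]

end Aux

/-- **Lemma 7.** For a discrete quantum semigroup, a linear functional `𝔫` on
`F_b(𝔾)` and `f ∈ F_{b:1}(𝔾 × 𝔾)`: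
`Δ((𝔫 ⊗̃ id)(f)) = (𝔫 ⊗̃ id ⊗̃ id)((id ⊗̃ Δ)(f))`. -/
theorem stmt_3 {I : Type*} (n : I → ℕ) (hn : ∀ γ, 0 < n γ) (C : Comul n)
    (𝔫 : Fb n →ₗ[ℂ] ℂ) (f : FI2 n n) (hf : Fb1 f) :
    C.ind (fTenR 𝔫 f) = fTenR3 𝔫 (tenL2 C.ind f) := by
  classical
  funext β γ
  apply Matrix.ext; intro u v
  set S := (C.finite β γ).toFinset with hS
  set c : ∀ α : I, Fin (n α) → Fin (n α) → ℂ :=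
    fun α i j => C.D α β γ (Matrix.single i j 1) u v with hc
  have hsupp : ∀ (g : FI n), (Function.support fun α => C.D α β γ (g α)) ⊆ ↑S := by
    intro g α hα
    simp only [hS, Set.Finite.coe_toFinset, Set.mem_setOf_eq]
    intro h0
    exact hα (show C.D α β γ (g α) = 0 by rw [h0]; rfl)
  -- LHS
  have hL : C.ind (fTenR 𝔫 f) β γ u v
      = ∑ α ∈ S, ∑ i : Fin (n α), ∑ j : Fin (n α),
          apF 𝔫 (slice2 f α i j) * c α i j := by
    show (∑ᶠ α : I, C.D α β γ (fTenR 𝔫 f α)) u v = _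
    rw [finsum_eq_sum_of_support_subset _ (hsupp _), Matrix.sum_apply]
    refine Finset.sum_congr rfl fun α _ => ?_
    rw [D_apply_expand _ (C.linear α β γ)]
    rfl
  -- RHS
  set G : FI n := fun lam =>
    Matrix.of fun k l => tenL2 C.ind f lam β γ (k, u) (l, v) with hG
  have hGeq : G = ∑ α ∈ S, ∑ i : Fin (n α), ∑ j : Fin (n α),
      c α i j • slice2 f α i j := by
    funext lam
    apply Matrix.ext; intro k l
    have h1 : G lam k l = (∑ᶠ α : I, C.D α β γ (slice1 f lam k l α)) u v := rfl
    rw [h1, finsum_eq_sum_of_support_subset _ (hsupp _), Matrix.sum_apply]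
    rw [Finset.sum_apply, Matrix.sum_apply]
    refine Finset.sum_congr rfl fun α _ => ?_
    rw [D_apply_expand _ (C.linear α β γ)]
    rw [Finset.sum_apply, Matrix.sum_apply]
    refine Finset.sum_congr rfl fun i _ => ?_
    rw [Finset.sum_apply, Matrix.sum_apply]
    refine Finset.sum_congr rfl fun j _ => ?_
    show slice1 f lam k l α i j * c α i j = (c α i j • slice2 f α i j) lam k l
    have h2 : slice1 f lam k l α i j = slice2 f α i j lam k l := rfl
    rw [h2, Pi.smul_apply, Matrix.smul_apply, smul_eq_mul, mul_comm]
  have hGmem : G ∈ Fb n := by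
    rw [hGeq]
    refine Submodule.sum_mem _ fun α _ => Submodule.sum_mem _ fun i _ =>
      Submodule.sum_mem _ fun j _ => Submodule.smul_mem _ _ (slice2_mem_Fb hf α i j)
  have hR : fTenR3 𝔫 (tenL2 C.ind f) β γ u v
      = ∑ α ∈ S, ∑ i : Fin (n α), ∑ j : Fin (n α),
          apF 𝔫 (slice2 f α i j) * c α i j := by
    show apF 𝔫 G = _
    rw [apF_eq 𝔫 hGmem]
    have hsub : (⟨G, hGmem⟩ : Fb n) = ∑ α ∈ S, ∑ i : Fin (n α), ∑ j : Fin (n α),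
        c α i j • (⟨slice2 f α i j, slice2_mem_Fb hf α i j⟩ : Fb n) := by
      apply Subtype.ext
      push_cast
      rw [hGeq]
    rw [hsub]
    rw [map_sum]
    refine Finset.sum_congr rfl fun α _ => ?_
    rw [map_sum]
    refine Finset.sum_congr rfl fun i _ => ?_
    rw [map_sum]
    refine Finset.sum_congr rfl fun j _ => ?_
    rw [map_smul, smul_eq_mul, apF_eq 𝔫 (slice2_mem_Fb hf α i j), mul_comm]
  rw [hL, hR]


end DQSG
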